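/- With the setup of the iterated matching-removal process on a bipartite graph G on n vertices: if I_k is a maximum independent set of the residual graph G_k, I*_k a maximum k-dependent set of G, and E'_k = E(G[I*_k]) \ 𝓜_k, then |I_k| ≥ |I*_k|/2 + |E'_k|/k. -/

import Mathlib

open scoped Classical

variable {V : Type*} [Fintype V] [DecidableEq V]

/-- A matching of `G`, given as a finite set of edges of `G` that are pairwise vertex-disjoint. -/
def IsMatchingE (G : SimpleGraph V) (M : Finset (Sym2 V)) : Prop :=
  ↑M ⊆ G.edgeSet ∧ (M : Set (Sym2 V)).Pairwise fun e f => ∀ v, v ∈ e → v ∉ f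

/-- A maximum-cardinality matching of `G`. -/
def IsMaxMatchingE (G : SimpleGraph V) (M : Finset (Sym2 V)) : Prop :=
  IsMatchingE G M ∧ ∀ M', IsMatchingE G M' → M'.card ≤ M.card

/-- An independent set of `G`. -/
def IsIndepF (G : SimpleGraph V) (S : Finset V) : Prop :=
  ∀ v ∈ S, ∀ w ∈ S, ¬G.Adj v w

/-- A maximum-cardinality independent set of `G`. -/
def IsMaxIndepF (G : SimpleGraph V) (S : Finset V) : Prop :=
  IsIndepF G S ∧ ∀ S', IsIndepF G S' → S'.card ≤ S.card

/-- A `k`-dependent set: every vertex of the induced subgraph `G[S]` has degree at most `k`. -/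
def KDepSet (G : SimpleGraph V) (k : ℕ) (S : Finset V) : Prop :=
  ∀ v ∈ S, (S.filter fun w => G.Adj v w).card ≤ k

/-- A maximum-cardinality `k`-dependent set of `G`. -/
def IsMaxKDep (G : SimpleGraph V) (k : ℕ) (S : Finset V) : Prop :=
  KDepSet G k S ∧ ∀ T, KDepSet G k T → T.card ≤ S.card

/-- The edges of the induced subgraph `G[S]`. -/
noncomputable def inducedEdges (G : SimpleGraph V) (S : Finset V) : Finset (Sym2 V) :=
  G.edgeFinset.filter fun e => ∀ v ∈ e, v ∈ S

/-- The residual graph after deleting the matchings `M 0, ..., M (i-1)` from `G`. -/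
def resid (G : SimpleGraph V) (M : ℕ → Finset (Sym2 V)) (i : ℕ) : SimpleGraph V :=
  G.deleteEdges (⋃ j ∈ Set.Iio i, (M j : Set (Sym2 V)))

/-- The accumulated set of deleted edges `M 0 ∪ ... ∪ M (k-1)`. -/
def accumM (M : ℕ → Finset (Sym2 V)) (k : ℕ) : Finset (Sym2 V) :=
  (Finset.range k).biUnion M

open Finset in
lemma konig_indep (H : SimpleGraph V) (c : H.Coloring (Fin 2)) :
    ∃ S : Finset V, IsIndepF H S ∧ ∃ N : Finset (Sym2 V), IsMatchingE H N ∧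
      Fintype.card V ≤ S.card + N.card := by
  classical
  set A : Finset V := univ.filter (fun v => c v = 0) with hA
  set B : Finset V := univ.filter (fun v => ¬ c v = 0) with hB
  have hAB : ∀ v w, H.Adj v w → v ∈ A → w ∈ B := by
    intro v w hvw hv
    simp only [hA, hB, mem_filter, mem_univ, true_and] at hv ⊢
    have hne := c.valid hvw
    intro h; exact hne (hv.trans h.symm)
  set nbr : Finset V → Finset V := fun S => univ.filter (fun w => ∃ v ∈ S, H.Adj v w)
    with hnbr
  have hnbrB : ∀ S, S ⊆ A → nbr S ⊆ B := by
    intro S hS w hw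
    obtain ⟨v, hv, hvw⟩ := (mem_filter.mp hw).2
    exact hAB v w hvw (hS hv)
  obtain ⟨S₀, hS₀mem, hS₀max⟩ := A.powerset.exists_max_image
    (fun S => (S.card : ℤ) - ((nbr S).card : ℤ)) ⟨∅, by simp⟩
  have hS₀A : S₀ ⊆ A := mem_powerset.mp hS₀mem
  have hnbr_empty : nbr ∅ = ∅ := by
    ext w; simp [hnbr]
  have hd0 : (0 : ℤ) ≤ (S₀.card : ℤ) - ((nbr S₀).card : ℤ) := by
    have := hS₀max ∅ (mem_powerset.mpr (empty_subset _))
    simpa [hnbr_empty] using this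
  have hle : (nbr S₀).card ≤ S₀.card := by exact_mod_cast sub_nonneg.mp hd0
  set dnat := S₀.card - (nbr S₀).card with hdnat
  have hS₀card : S₀.card = (nbr S₀).card + dnat := by omega
  have hmax : ∀ S, S ⊆ A → S.card ≤ (nbr S).card + dnat := by
    intro S hS
    have h1 := hS₀max S (mem_powerset.mpr hS)
    have h2 : (S.card : ℤ) ≤ ((nbr S).card : ℤ) + dnat := by
      have : (dnat : ℤ) = (S₀.card : ℤ) - ((nbr S₀).card : ℤ) := by
        simp [hdnat, Nat.cast_sub hle]
      omega
    exact_mod_cast h2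
  -- Hall's theorem with dnat dummy vertices
  set t : ↥A → Finset (V ⊕ Fin dnat) :=
    fun a => ((nbr {a.1}).image (Sum.inl : V → V ⊕ Fin dnat)) ∪ (univ.image (Sum.inr : Fin dnat → V ⊕ Fin dnat)) with ht
  have hall : ∀ s : Finset ↥A, s.card ≤ (s.biUnion t).card := by
    intro s
    rcases s.eq_empty_or_nonempty with rfl | ⟨a₀, ha₀⟩
    · simp
    set S := s.image Subtype.val with hSdef
    have hScard : S.card = s.card := card_image_of_injective _ Subtype.val_injective
    have hSA : S ⊆ A := by
      intro v hv
      obtain ⟨a, _, rfl⟩ := mem_image.mp hv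
      exact a.2
    have hsub : ((nbr S).image Sum.inl ∪ univ.image Sum.inr) ⊆ s.biUnion t := by
      intro x hx
      rcases mem_union.mp hx with hx | hx
      · obtain ⟨b, hb, rfl⟩ := mem_image.mp hx
        obtain ⟨v, hv, hvb⟩ := (mem_filter.mp hb).2
        obtain ⟨a, ha, rfl⟩ := mem_image.mp hv
        refine mem_biUnion.mpr ⟨a, ha, mem_union_left _ (mem_image_of_mem _ ?_)⟩
        exact mem_filter.mpr ⟨mem_univ _, ⟨a.1, mem_singleton_self _, hvb⟩⟩
      · exact mem_biUnion.mpr ⟨a₀, ha₀, mem_union_right _ hx⟩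
    have hdisj : Disjoint ((nbr S).image (Sum.inl : V → V ⊕ Fin dnat))
        (univ.image Sum.inr) := by
      simp only [disjoint_left, mem_image]
      rintro x ⟨b, _, rfl⟩ ⟨j, _, h⟩
      exact Sum.inl_ne_inr h.symm
    have hcard : (nbr S).card + dnat ≤ (s.biUnion t).card := by
      have h1 : ((nbr S).image (Sum.inl : V → V ⊕ Fin dnat) ∪ univ.image Sum.inr).card
          = (nbr S).card + dnat := by
        rw [card_union_of_disjoint hdisj, card_image_of_injective _ Sum.inl_injective,
          card_image_of_injective _ Sum.inr_injective, card_univ, Fintype.card_fin]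
      rw [← h1]
      exact card_le_card hsub
    calc s.card = S.card := hScard.symm
      _ ≤ (nbr S).card + dnat := hmax S hSA
      _ ≤ _ := hcard
  obtain ⟨f, hfinj, hft⟩ := (Finset.all_card_le_biUnion_card_iff_exists_injective t).mp hall
  set hfn : ↥A → V := fun a => Sum.elim id (fun _ => a.1) (f a) with hhfn
  set Agood : Finset ↥A := univ.filter (fun a => (f a).isLeft) with hAgood
  have hgood : ∀ a ∈ Agood, f a = Sum.inl (hfn a) ∧ H.Adj a.1 (hfn a) := by
    intro a ha
    rcases mem_union.mp (hft a) with h | h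
    · obtain ⟨b, hb, hEq⟩ := mem_image.mp h
      have hb' : hfn a = b := by simp [hhfn, ← hEq]
      obtain ⟨v, hv, hvb⟩ := (mem_filter.mp hb).2
      rw [mem_singleton] at hv
      subst hv
      rw [hb']
      exact ⟨hEq.symm, hvb⟩
    · exfalso
      obtain ⟨j, _, hEq⟩ := mem_image.mp h
      have := (mem_filter.mp ha).2
      rw [← hEq] at this
      simp at this
  have hBgood : ∀ a ∈ Agood, hfn a ∈ B := fun a ha => hAB _ _ (hgood a ha).2 a.2
  have hcA : ∀ a : ↥A, c a.1 = 0 := fun a => (mem_filter.mp a.2).2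
  have hcB : ∀ v ∈ B, ¬ c v = 0 := fun v hv => (mem_filter.mp hv).2
  set N : Finset (Sym2 V) := Agood.image (fun a => s(a.1, hfn a)) with hN
  have hinjOn : Set.InjOn (fun a : ↥A => s(a.1, hfn a)) Agood := by
    intro a ha a' ha' hEq
    rcases Sym2.eq_iff.mp hEq with ⟨h1, _⟩ | ⟨h1, _⟩
    · exact Subtype.ext h1
    · exact absurd (hcA a) (h1 ▸ hcB _ (hBgood a' ha'))
  have hNcard : N.card = Agood.card := card_image_of_injOn hinjOn
  have hbad : (univ.filter (fun a : ↥A => ¬ (f a).isLeft)).card ≤ dnat := by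
    set Abad := univ.filter (fun a : ↥A => ¬ (f a).isLeft) with hAbad
    have himg : Abad.image f ⊆ univ.image (Sum.inr : Fin dnat → V ⊕ Fin dnat) := by
      intro x hx
      obtain ⟨a, ha, rfl⟩ := mem_image.mp hx
      rcases mem_union.mp (hft a) with h | h
      · exfalso
        obtain ⟨b, _, hEq⟩ := mem_image.mp h
        have := (mem_filter.mp ha).2
        rw [← hEq] at this
        simp at this
      · exact h
    calc Abad.card = (Abad.image f).card := (card_image_of_injective _ hfinj).symm
      _ ≤ (univ.image (Sum.inr : Fin dnat → V ⊕ Fin dnat)).card := card_le_card himg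
      _ ≤ dnat := by
          rw [card_image_of_injective _ Sum.inr_injective, card_univ, Fintype.card_fin]
  have hAcard : A.card ≤ N.card + dnat := by
    have hsplit : Agood.card + (univ.filter (fun a : ↥A => ¬ (f a).isLeft)).card
        = Fintype.card ↥A := by
      rw [hAgood, card_filter_add_card_filter_not, card_univ]
    rw [← Fintype.card_coe A]
    omega
  have hNmatch : IsMatchingE H N := by
    constructor
    · intro e he
      obtain ⟨a, ha, rfl⟩ := mem_image.mp he
      exact (hgood a ha).2
    · intro e he f' hf' hne v hv hvf
      obtain ⟨a, ha, rfl⟩ := mem_image.mp he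
      obtain ⟨a', ha', rfl⟩ := mem_image.mp hf'
      have hBa := hBgood a ha
      have hBa' := hBgood a' ha'
      rcases Sym2.mem_iff.mp hv with rfl | rfl <;> rcases Sym2.mem_iff.mp hvf with h | h
      · exact hne (by rw [Subtype.ext h])
      · exact hcB _ hBa' (h ▸ hcA a)
      · exact hcB _ hBa (h.symm ▸ hcA a')
      · have : a = a' := hfinj (by rw [(hgood a ha).1, (hgood a' ha').1, h])
        exact hne (by rw [this])
  -- the independent set
  set S1 := S₀ ∪ (B \ nbr S₀) with hS1
  have hnbrS₀B : nbr S₀ ⊆ B := hnbrB S₀ hS₀A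
  have hindep : IsIndepF H S1 := by
    intro v hv w hw hvw
    rcases mem_union.mp hv with hv | hv <;> rcases mem_union.mp hw with hw | hw
    · exact hcB _ (hAB v w hvw (hS₀A hv)) ((mem_filter.mp (hS₀A hw)).2)
    · exact (mem_sdiff.mp hw).2 (mem_filter.mpr ⟨mem_univ _, ⟨v, hv, hvw⟩⟩)
    · exact (mem_sdiff.mp hv).2 (mem_filter.mpr ⟨mem_univ _, ⟨w, hw, hvw.symm⟩⟩)
    · have h1 := hcB _ (mem_sdiff.mp hv).1
      have h2 := hcB _ (mem_sdiff.mp hw).1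
      have := c.valid hvw
      omega
  have hS1card : B.card + dnat ≤ S1.card := by
    have hdisj : Disjoint S₀ (B \ nbr S₀) := by
      rw [disjoint_left]
      intro v hv hv'
      exact hcB _ (mem_sdiff.mp hv').1 ((mem_filter.mp (hS₀A hv)).2)
    rw [hS1, card_union_of_disjoint hdisj, card_sdiff_of_subset hnbrS₀B]
    have := card_le_card hnbrS₀B
    omega
  have hn : A.card + B.card = Fintype.card V := by
    rw [hA, hB, card_filter_add_card_filter_not, card_univ]
  exact ⟨S1, hindep, N, hNmatch, by omega⟩

lemma matchingE_mono {H H' : SimpleGraph V} (h : H ≤ H') {N : Finset (Sym2 V)}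
    (hN : IsMatchingE H N) : IsMatchingE H' N :=
  ⟨fun e he => SimpleGraph.edgeSet_mono h (hN.1 he), hN.2⟩

lemma resid_anti (G : SimpleGraph V) (M : ℕ → Finset (Sym2 V)) {i j : ℕ} (h : i ≤ j) :
    resid G M j ≤ resid G M i :=
  SimpleGraph.deleteEdges_anti
    (Set.biUnion_subset_biUnion_left (Set.Iio_subset_Iio h))

open Finset in
lemma handshake_kdep (G : SimpleGraph V) (k : ℕ) (S : Finset V) (hS : KDepSet G k S) :
    2 * (inducedEdges G S).card ≤ k * S.card := by
  classical
  let G' : SimpleGraph V :=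
    { Adj := fun v w => G.Adj v w ∧ v ∈ S ∧ w ∈ S
      symm := ⟨fun v w ⟨h, hv, hw⟩ => ⟨h.symm, hw, hv⟩⟩
      loopless := ⟨fun v h => G.loopless.irrefl v h.1⟩ }
  have hAdj : ∀ v w, G'.Adj v w ↔ (G.Adj v w ∧ v ∈ S ∧ w ∈ S) := fun v w => Iff.rfl
  letI : DecidableRel G'.Adj := fun v w => Classical.dec _
  have hedge : G'.edgeFinset = inducedEdges G S := by
    ext e
    refine Sym2.inductionOn e ?_
    intro x y
    simp only [SimpleGraph.mem_edgeFinset, SimpleGraph.mem_edgeSet, inducedEdges,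
      mem_filter, hAdj, Sym2.mem_iff]
    constructor
    · rintro ⟨h, hx, hy⟩
      exact ⟨h, by rintro v (rfl | rfl) <;> assumption⟩
    · rintro ⟨h, hall⟩
      exact ⟨h, hall x (Or.inl rfl), hall y (Or.inr rfl)⟩
  have hdeg : ∀ v, G'.degree v ≤ if v ∈ S then k else 0 := by
    intro v
    by_cases hv : v ∈ S
    · simp only [hv, if_true]
      refine le_trans (card_le_card (t := S.filter fun w => G.Adj v w) ?_) (hS v hv)
      intro w hw
      rw [SimpleGraph.mem_neighborFinset, hAdj] at hw
      exact mem_filter.mpr ⟨hw.2.2, hw.1⟩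
    · simp only [hv, if_false, Nat.le_zero, SimpleGraph.degree, card_eq_zero]
      ext w
      simp only [SimpleGraph.mem_neighborFinset, hAdj, notMem_empty, iff_false]
      rintro ⟨_, hvS, _⟩
      exact hv hvS
  have hsum := G'.sum_degrees_eq_twice_card_edges
  have hsum2 : ∑ v, G'.degree v ≤ k * S.card := by
    calc ∑ v, G'.degree v ≤ ∑ v, if v ∈ S then k else 0 :=
          Finset.sum_le_sum fun v _ => hdeg v
      _ = ∑ v ∈ S, (k : ℕ) := by rw [Finset.sum_ite_mem, univ_inter]
      _ = k * S.card := by rw [Finset.sum_const, smul_eq_mul, mul_comm]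
  rw [← hedge]
  omega

set_option maxHeartbeats 1000000 in
open Finset in
theorem stmt5 (G : SimpleGraph V) (hG : G.Colorable 2) (k : ℕ) (hk : 1 ≤ k)
    (M : ℕ → Finset (Sym2 V)) (hM : ∀ i < k, IsMaxMatchingE (resid G M i) (M i))
    (I : Finset V) (hI : IsMaxIndepF (resid G M k) I)
    (Istar : Finset V) (hIstar : IsMaxKDep G k Istar) :
    (I.card : ℝ) ≥
      (Istar.card : ℝ) / 2 + ((inducedEdges G Istar) \ accumM M k).card / k := by
  classical
  obtain ⟨c⟩ := hG
  set H := resid G M k with hH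
  have hHle : H ≤ G := SimpleGraph.deleteEdges_le _
  have cH : H.Coloring (Fin 2) :=
    SimpleGraph.Coloring.mk (fun v => c v) (fun {v w} h => c.valid (hHle h))
  obtain ⟨S, hSind, N, hNmatch, hcard⟩ := konig_indep H cH
  have hIS : S.card ≤ I.card := hI.2 S hSind
  have hkk : k - 1 < k := by omega
  have hNm : N.card ≤ (M (k-1)).card :=
    (hM (k-1) hkk).2 N (matchingE_mono (resid_anti G M (by omega : k-1 ≤ k)) hNmatch)
  have h1 : Fintype.card V ≤ I.card + (M (k-1)).card := by omega
  have hmono : ∀ i < k, (M (k-1)).card ≤ (M i).card := by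
    intro i hi
    exact (hM i hi).2 _ (matchingE_mono (resid_anti G M (by omega : i ≤ k-1))
      (hM (k-1) hkk).1)
  have hdisjM : ∀ i ∈ Finset.range k, ∀ j ∈ Finset.range k, i ≠ j →
      Disjoint (M i) (M j) := by
    have key : ∀ i j, i < j → j < k → Disjoint (M i) (M j) := by
      intro i j hij hjk
      rw [Finset.disjoint_left]
      intro e hei hej
      have hmem := (hM j hjk).1.1 hej
      rw [resid, SimpleGraph.edgeSet_deleteEdges] at hmem
      exact hmem.2 (Set.mem_biUnion (show i ∈ Set.Iio j from hij) hei)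
    intro i hi j hj hne
    rcases lt_or_gt_of_ne hne with h | h
    · exact key i j h (mem_range.mp hj)
    · exact (key j i h (mem_range.mp hi)).symm
  have hacc : (accumM M k).card = ∑ i ∈ Finset.range k, (M i).card :=
    Finset.card_biUnion hdisjM
  have h2 : k * (M (k-1)).card ≤ (accumM M k).card := by
    rw [hacc]
    have := Finset.card_nsmul_le_sum (Finset.range k) (fun i => (M i).card)
      ((M (k-1)).card) (fun i hi => hmono i (mem_range.mp hi))
    simpa [card_range, smul_eq_mul] using this
  set E := accumM M k with hE
  have hEsub : E ⊆ G.edgeFinset := by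
    intro e he
    obtain ⟨i, hi, hei⟩ := Finset.mem_biUnion.mp he
    have hmem := (hM i (mem_range.mp hi)).1.1 hei
    rw [resid, SimpleGraph.edgeSet_deleteEdges] at hmem
    exact SimpleGraph.mem_edgeFinset.mpr hmem.1
  set P : Sym2 V → Prop := fun e => ∀ v ∈ e, v ∈ Istar with hP
  have hsplit : (E.filter P).card + (E.filter (fun e => ¬ P e)).card = E.card :=
    Finset.card_filter_add_card_filter_not (p := P)
  have hAin : E.filter P = inducedEdges G Istar ∩ E := by
    ext e
    simp only [inducedEdges, mem_filter, mem_inter, hP]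
    constructor
    · rintro ⟨he, hp⟩; exact ⟨⟨hEsub he, hp⟩, he⟩
    · rintro ⟨⟨_, hp⟩, he⟩; exact ⟨he, hp⟩
  have hindsplit : (inducedEdges G Istar ∩ E).card + (inducedEdges G Istar \ E).card
      = (inducedEdges G Istar).card := card_inter_add_card_sdiff _ _
  have h5 : 2 * (inducedEdges G Istar).card ≤ k * Istar.card :=
    handshake_kdep G k Istar hIstar.1
  have hvb : ∀ v : V, (E.filter (fun e => v ∈ e)).card ≤ k := by
    intro v
    calc (E.filter (fun e => v ∈ e)).card
        ≤ ∑ i ∈ Finset.range k, ((M i).filter (fun e => v ∈ e)).card := by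
          rw [hE, accumM, Finset.filter_biUnion]
          exact Finset.card_biUnion_le
      _ ≤ ∑ _i ∈ Finset.range k, 1 := by
          refine Finset.sum_le_sum fun i hi => ?_
          refine card_le_one.mpr fun e he f hf => ?_
          by_contra hne
          obtain ⟨he, hve⟩ := mem_filter.mp he
          obtain ⟨hf, hvf⟩ := mem_filter.mp hf
          exact (hM i (mem_range.mp hi)).1.2 he hf hne v hve hvf
      _ = k := by simp
  have h6 : (E.filter fun e => ¬ P e).card ≤ k * (univ \ Istar).card := by
    have hsub2 : E.filter (fun e => ¬ P e) ⊆
        (univ \ Istar).biUnion (fun v => E.filter (fun e => v ∈ e)) := by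
      intro e he
      obtain ⟨he', hp⟩ := mem_filter.mp he
      simp only [hP, not_forall, exists_prop] at hp
      obtain ⟨v, hv, hvI⟩ := hp
      exact mem_biUnion.mpr ⟨v, mem_sdiff.mpr ⟨mem_univ _, hvI⟩,
        mem_filter.mpr ⟨he', hv⟩⟩
    calc (E.filter fun e => ¬ P e).card
        ≤ ((univ \ Istar).biUnion (fun v => E.filter (fun e => v ∈ e))).card :=
          card_le_card hsub2
      _ ≤ ∑ v ∈ univ \ Istar, (E.filter (fun e => v ∈ e)).card :=
          Finset.card_biUnion_le
      _ ≤ ∑ _v ∈ univ \ Istar, k := Finset.sum_le_sum fun v _ => hvb v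
      _ = k * (univ \ Istar).card := by rw [Finset.sum_const, smul_eq_mul, mul_comm]
  have hIsum : Istar.card + (univ \ Istar).card = Fintype.card V := by
    rw [card_sdiff_of_subset (subset_univ _), card_univ]
    have := card_le_card (subset_univ Istar)
    rw [card_univ] at this
    omega
  -- assemble
  set nn := Fintype.card V
  set m := (M (k-1)).card
  set a := (E.filter P).card
  set b := (E.filter fun e => ¬ P e).card
  set ie := (inducedEdges G Istar).card
  set e' := (inducedEdges G Istar \ E).card
  set u := (univ \ Istar).card
  have c1 : k * nn ≤ k * I.card + k * m := by
    calc k * nn ≤ k * (I.card + m) := Nat.mul_le_mul_left k h1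
      _ = k * I.card + k * m := Nat.mul_add k _ _
  have c2 : k * m ≤ a + b := by rw [hsplit]; exact h2
  have c4 : 2*a + 2*e' ≤ k * Istar.card := by
    have ha : a = (inducedEdges G Istar ∩ E).card := congrArg Finset.card hAin
    omega
  have c5 : k * nn = k * Istar.card + k * u := by rw [← Nat.mul_add, hIsum]
  have key : k * Istar.card + 2 * e' ≤ 2 * (k * I.card) := by
    have c3 : b ≤ k * u := h6
    zify at c1 c2 c3 c4 c5 ⊢
    linarith
  have hk0 : (0:ℝ) < k := by exact_mod_cast hk
  have hrw : (Istar.card:ℝ)/2 + (e' : ℝ)/k = (k*Istar.card + 2*e')/(2*k) := by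
    field_simp
  rw [ge_iff_le, hrw, div_le_iff₀ (by positivity)]
  have keyR : (k:ℝ) * Istar.card + 2 * e' ≤ 2 * (k * I.card) := by exact_mod_cast key
  nlinarith [keyR]
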